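/- The set function F1(S) = nL − Σ_{u ∈ V∖S} h^L_{uS} is submodular: for all S ⊆ T ⊆ V and u ∈ V∖T, F1(S ∪ {u}) − F1(S) ≥ F1(T ∪ {u}) − F1(T). -/

import Mathlib

open scoped BigOperators

/-- Transition probability of the simple random walk. -/
noncomputable def transP {V : Type*} [Fintype V] [DecidableEq V] (G : SimpleGraph V)
    [DecidableRel G.Adj] (u w : V) : ℝ :=
  if G.Adj u w then 1 / (G.degree u : ℝ) else 0

/-- The generalized `L`-truncated hitting time `h^L_{uS}`, defined recursively:
`h^0_{uS} = 0`; for `L ≥ 1`, `h^L_{uS} = 0` if `u ∈ S`, and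
`h^L_{uS} = 1 + ∑_{w ∈ V∖S} p_{uw} h^{L-1}_{wS}` otherwise. -/
noncomputable def hT {V : Type*} [Fintype V] [DecidableEq V] (G : SimpleGraph V)
    [DecidableRel G.Adj] : ℕ → V → Finset V → ℝ
  | 0, _, _ => 0
  | (L + 1), u, S => if u ∈ S then 0 else 1 + ∑ w ∈ Sᶜ, transP G u w * hT G L w S

/-- The objective function `F1(S) = nL − ∑_{u ∈ V∖S} h^L_{uS}`. -/
noncomputable def F1 {V : Type*} [Fintype V] [DecidableEq V] (G : SimpleGraph V)
    [DecidableRel G.Adj] (L : ℕ) (S : Finset V) : ℝ :=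
  (Fintype.card V : ℝ) * L - ∑ u ∈ Sᶜ, hT G L u S

section Aux

variable {V : Type*} [Fintype V] [DecidableEq V] (G : SimpleGraph V) [DecidableRel G.Adj]

/-- Survival probability: walk from `v` avoids `S` for `k` steps. -/
noncomputable def qk : ℕ → V → Finset V → ℝ
  | 0, v, S => if v ∈ S then 0 else 1
  | (k + 1), v, S => if v ∈ S then 0 else ∑ w ∈ Sᶜ, transP G v w * qk k w S

lemma transP_nonneg (u w : V) : 0 ≤ transP G u w := by
  unfold transP; split <;> positivity

lemma qk_nonneg : ∀ (k : ℕ) (v : V) (S : Finset V), 0 ≤ qk G k v S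
  | 0, v, S => by unfold qk; split <;> norm_num
  | (k + 1), v, S => by
    unfold qk; split
    · exact le_rfl
    · exact Finset.sum_nonneg fun w _ => mul_nonneg (transP_nonneg G v w) (qk_nonneg k w S)

lemma qk_mem {v : V} {S : Finset V} (h : v ∈ S) (k : ℕ) : qk G k v S = 0 := by
  cases k <;> simp [qk, h]

lemma qk_sum_compl (k : ℕ) (v : V) (S : Finset V) :
    ∑ w ∈ Sᶜ, transP G v w * qk G k w S = ∑ w, transP G v w * qk G k w S := by
  apply Finset.sum_subset (Finset.subset_univ _)
  intro w _ hw
  rw [Finset.mem_compl, not_not] at hw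
  rw [qk_mem G hw, mul_zero]

lemma qk_anti {S T : Finset V} (hST : S ⊆ T) :
    ∀ (k : ℕ) (v : V), qk G k v T ≤ qk G k v S
  | 0, v => by
    unfold qk
    by_cases h : v ∈ T
    · simp only [h, if_pos]; split <;> norm_num
    · have hS : v ∉ S := fun hc => h (hST hc)
      simp [h, hS]
  | (k + 1), v => by
    by_cases h : v ∈ T
    · rw [qk_mem G h]; exact qk_nonneg G _ v S
    · have hS : v ∉ S := fun hc => h (hST hc)
      show (if v ∈ T then 0 else ∑ w ∈ Tᶜ, transP G v w * qk G k w T) ≤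
        (if v ∈ S then 0 else ∑ w ∈ Sᶜ, transP G v w * qk G k w S)
      rw [if_neg h, if_neg hS, qk_sum_compl, qk_sum_compl]
      exact Finset.sum_le_sum fun w _ =>
        mul_le_mul_of_nonneg_left (qk_anti hST k w) (transP_nonneg G v w)

lemma qk_diff {S T : Finset V} (hST : S ⊆ T) {u : V} (hu : u ∉ T) :
    ∀ (k : ℕ) (v : V),
      qk G k v T - qk G k v (insert u T) ≤ qk G k v S - qk G k v (insert u S)
  | 0, v => by
    have huS : u ∉ S := fun hc => hu (hST hc)
    unfold qk
    by_cases hvT : v ∈ T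
    · have hvS' : v ∈ insert u T := Finset.mem_insert_of_mem hvT
      simp only [hvT, if_pos, hvS', sub_zero, sub_self]
      split <;> split <;> simp_all <;> norm_num
    · have hvS : v ∉ S := fun hc => hvT (hST hc)
      by_cases hvu : v = u
      · subst hvu
        simp [hvT, hvS, Finset.mem_insert_self]
      · have h1 : v ∉ insert u T := by simp [hvu, hvT]
        have h2 : v ∉ insert u S := by simp [hvu, hvS]
        simp [hvT, hvS, h1, h2]
  | (k + 1), v => by
    have huS : u ∉ S := fun hc => hu (hST hc)
    have expand : ∀ (A : Finset V), v ∉ A →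
        qk G (k + 1) v A = ∑ w, transP G v w * qk G k w A := by
      intro A hA
      show (if v ∈ A then 0 else ∑ w ∈ Aᶜ, transP G v w * qk G k w A) = _
      rw [if_neg hA, qk_sum_compl]
    by_cases hvu : v = u
    · subst hvu
      rw [qk_mem G (Finset.mem_insert_self v T), qk_mem G (Finset.mem_insert_self v S),
        sub_zero, sub_zero, expand T hu, expand S huS]
      exact Finset.sum_le_sum fun w _ =>
        mul_le_mul_of_nonneg_left (qk_anti G hST k w) (transP_nonneg G v w)
    · by_cases hvT : v ∈ T
      · have h1 : v ∈ insert u T := Finset.mem_insert_of_mem hvT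
        rw [qk_mem G hvT, qk_mem G h1, sub_self]
        by_cases hvS : v ∈ S
        · rw [qk_mem G hvS, qk_mem G (Finset.mem_insert_of_mem hvS), sub_self]
        · have h2 : v ∉ insert u S := by simp [hvu, hvS]
          rw [expand S hvS, expand (insert u S) h2, ← Finset.sum_sub_distrib]
          apply Finset.sum_nonneg
          intro w _
          rw [← mul_sub]
          exact mul_nonneg (transP_nonneg G v w)
            (sub_nonneg.mpr (qk_anti G (Finset.subset_insert u S) k w))
      · have hvS : v ∉ S := fun hc => hvT (hST hc)
        have h1 : v ∉ insert u T := by simp [hvu, hvT]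
        have h2 : v ∉ insert u S := by simp [hvu, hvS]
        rw [expand T hvT, expand (insert u T) h1, expand S hvS, expand (insert u S) h2,
          ← Finset.sum_sub_distrib, ← Finset.sum_sub_distrib]
        apply Finset.sum_le_sum
        intro w _
        rw [← mul_sub, ← mul_sub]
        exact mul_le_mul_of_nonneg_left (qk_diff hST hu k w) (transP_nonneg G v w)

lemma hT_eq_sum_qk (S : Finset V) : ∀ (L : ℕ) (v : V),
    hT G L v S = ∑ k ∈ Finset.range L, qk G k v S
  | 0, v => by simp [hT]
  | (L + 1), v => by
    by_cases h : v ∈ S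
    · rw [show hT G (L + 1) v S = 0 by simp [hT, h]]
      rw [eq_comm]
      exact Finset.sum_eq_zero fun k _ => qk_mem G h k
    · have : hT G (L + 1) v S = 1 + ∑ w ∈ Sᶜ, transP G v w * hT G L w S := by
        simp [hT, h]
      rw [this, Finset.sum_range_succ']
      have h0 : qk G 0 v S = 1 := by simp [qk, h]
      rw [h0]
      have step : ∀ k, qk G (k + 1) v S = ∑ w ∈ Sᶜ, transP G v w * qk G k w S := by
        intro k; simp [qk, h]
      rw [add_comm (1 : ℝ)]
      congr 1
      calc ∑ w ∈ Sᶜ, transP G v w * hT G L w S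
          = ∑ w ∈ Sᶜ, transP G v w * ∑ k ∈ Finset.range L, qk G k w S := by
            exact Finset.sum_congr rfl fun w _ => by rw [hT_eq_sum_qk S L w]
        _ = ∑ w ∈ Sᶜ, ∑ k ∈ Finset.range L, transP G v w * qk G k w S := by
            exact Finset.sum_congr rfl fun w _ => Finset.mul_sum _ _ _
        _ = ∑ k ∈ Finset.range L, ∑ w ∈ Sᶜ, transP G v w * qk G k w S :=
            Finset.sum_comm
        _ = ∑ k ∈ Finset.range L, qk G (k + 1) v S := by
            exact Finset.sum_congr rfl fun k _ => (step k).symm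

lemma hT_mem {v : V} {S : Finset V} (h : v ∈ S) (L : ℕ) : hT G L v S = 0 := by
  cases L <;> simp [hT, h]

lemma F1_eq (L : ℕ) (S : Finset V) :
    F1 G L S = (Fintype.card V : ℝ) * L - ∑ v, ∑ k ∈ Finset.range L, qk G k v S := by
  unfold F1
  congr 1
  rw [show (∑ u ∈ Sᶜ, hT G L u S) = ∑ u, hT G L u S by
    apply Finset.sum_subset (Finset.subset_univ _)
    intro w _ hw
    rw [Finset.mem_compl, not_not] at hw
    exact hT_mem G hw L]
  exact Finset.sum_congr rfl fun v _ => hT_eq_sum_qk G S L v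

end Aux

/-- `F1` is submodular: for `S ⊆ T ⊆ V` and `u ∈ V∖T`,
`F1(S ∪ {u}) − F1(S) ≥ F1(T ∪ {u}) − F1(T)`. -/
theorem F1_submodular {V : Type*} [Fintype V] [DecidableEq V] (G : SimpleGraph V)
    [DecidableRel G.Adj] (hG : ∀ v : V, (G.neighborFinset v).Nonempty) (L : ℕ)
    (S T : Finset V) (hST : S ⊆ T) (u : V) (hu : u ∉ T) :
    F1 G L (insert u T) - F1 G L T ≤ F1 G L (insert u S) - F1 G L S := by
  have key : ∀ v, ∑ k ∈ Finset.range L, (qk G k v T - qk G k v (insert u T)) ≤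
      ∑ k ∈ Finset.range L, (qk G k v S - qk G k v (insert u S)) := fun v =>
    Finset.sum_le_sum fun k _ => qk_diff G hST hu k v
  rw [F1_eq, F1_eq, F1_eq, F1_eq]
  have h1 : ∀ (A B : Finset V),
      ((Fintype.card V : ℝ) * L - ∑ v, ∑ k ∈ Finset.range L, qk G k v A) -
        ((Fintype.card V : ℝ) * L - ∑ v, ∑ k ∈ Finset.range L, qk G k v B) =
      ∑ v, ∑ k ∈ Finset.range L, (qk G k v B - qk G k v A) := by
    intro A B
    rw [sub_sub_sub_cancel_left, ← Finset.sum_sub_distrib]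
    exact Finset.sum_congr rfl fun v _ => (Finset.sum_sub_distrib _ _).symm
  rw [h1, h1]
  exact Finset.sum_le_sum fun v _ => key v
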